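/- Let aa and bb be finite sequences of elements of a commutative ring A generating ideals 𝔞 and 𝔟 respectively, with √𝔞 = √𝔟. Then aa is a weakly proregular sequence if and only if bb is a weakly proregular sequence. -/

import Mathlib

/-!
We use an explicit model for the Koszul complex `K(A; aa)` of a finite sequence
`aa = (a_1, ..., a_n)` in a commutative ring `A`: the degree `-q` component is the
free module of functions on the `q`-element subsets of `Fin n` (corresponding to the
basis of `Λ^q(A^n)`), and the differential is contraction against `aa` with the usual
signs.  The transition map `μ_{j,i} : K(A; aa^j) → K(A; aa^i)` multiplies the
component indexed by a subset `s` by `∏_{k ∈ s} a_k^(j-i)`.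

A sequence is weakly proregular if for every `q < 0` the inverse system
`{H^q(K(A; aa^i))}` is pro-zero: for every `i` there is `j ≥ i` such that the
transition map `H^q(K(A; aa^j)) → H^q(K(A; aa^i))` is zero, i.e. every degree `-q`
cocycle at level `j` is sent by `μ_{j,i}` to a coboundary at level `i`.
-/

/-- The degree `-q` component of the Koszul complex on `n` elements. -/
abbrev KoszulDeg (A : Type*) (n q : ℕ) : Type _ :=
  {s : Finset (Fin n) // s.card = q} → A

/-- The Koszul differential `K(A; aa)^{-(q+1)} → K(A; aa)^{-q}`, given by contraction
against the sequence `aa`, with the usual signs. -/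
noncomputable def koszulD {A : Type*} [CommRing A] {n : ℕ} (aa : Fin n → A) (q : ℕ)
    (f : KoszulDeg A n (q + 1)) : KoszulDeg A n q :=
  fun s => ∑ i ∈ (s.val)ᶜ.attach,
    (-1 : A) ^ (s.val.filter (fun k => k < i.val)).card * aa i.val *
      f ⟨insert i.val s.val, by
        rw [Finset.card_insert_of_notMem (Finset.mem_compl.mp i.property), s.property]⟩

/-- The transition map `μ_{j,i}` of the inverse system of Koszul complexes, in degree
`-q`, for exponents `j ≥ i` with `e = j - i`: multiplication by `∏_{k ∈ s} a_k^e` on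
the component indexed by the subset `s`. -/
noncomputable def koszulTransition {A : Type*} [CommRing A] {n : ℕ} (aa : Fin n → A)
    (e q : ℕ) (f : KoszulDeg A n q) : KoszulDeg A n q :=
  fun s => (∏ k ∈ s.val, aa k ^ e) * f s

/-- A finite sequence `aa` in a commutative ring `A` is weakly proregular if for every
`q < 0` the inverse system of Koszul cohomologies `{H^q(K(A; aa^i))}_{i ∈ ℕ}` is
pro-zero: for each `i` there is `j ≥ i` such that every cocycle of `K(A; aa^j)` in
degree `q` becomes a coboundary in `K(A; aa^i)` after applying `μ_{j,i}`. -/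
def IsWeaklyProregular {A : Type*} [CommRing A] {n : ℕ} (aa : Fin n → A) : Prop :=
  ∀ q i : ℕ, ∃ j : ℕ, i ≤ j ∧ ∀ f : KoszulDeg A n (q + 1),
    koszulD (fun k => aa k ^ j) q f = 0 →
    ∃ g : KoszulDeg A n (q + 2),
      koszulD (fun k => aa k ^ i) (q + 1) g = koszulTransition aa (j - i) (q + 1) f

/-- An ideal is weakly proregular if it is generated by a weakly proregular finite
sequence. -/
def Ideal.IsWeaklyProregular {A : Type*} [CommRing A] (I : Ideal A) : Prop :=
  ∃ (n : ℕ) (aa : Fin n → A), Ideal.span (Set.range aa) = I ∧ _root_.IsWeaklyProregular aa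

set_option maxHeartbeats 1000000

section helpers
variable {A : Type*} [CommRing A] {n : ℕ}

/-- extension of a Koszul cochain to all finsets, by zero. -/
noncomputable def wext {q : ℕ} (f : KoszulDeg A n q) : Finset (Fin n) → A :=
  fun t => if h : t.card = q then f ⟨t, h⟩ else 0

lemma wext_of_card {q : ℕ} (f : KoszulDeg A n q) {t : Finset (Fin n)} (h : t.card = q) :
    wext f t = f ⟨t, h⟩ := dif_pos h

lemma wext_zero {q : ℕ} (t : Finset (Fin n)) : wext (0 : KoszulDeg A n q) t = 0 := by
  unfold wext; split <;> rfl

lemma koszulD_apply (xx : Fin n → A) (q : ℕ) (f : KoszulDeg A n (q + 1))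
    (s : {s : Finset (Fin n) // s.card = q}) :
    koszulD xx q f s = ∑ i ∈ (s.val)ᶜ,
      (-1 : A) ^ (s.val.filter (fun k => k < i)).card * xx i * wext f (insert i s.val) := by
  rw [koszulD, ← Finset.sum_attach ((s.val)ᶜ)
    (fun i => (-1 : A) ^ (s.val.filter (fun k => k < i)).card * xx i * wext f (insert i s.val))]
  refine Finset.sum_congr rfl fun i _ => ?_
  have hc : (insert i.val s.val).card = q + 1 := by
    rw [Finset.card_insert_of_notMem (Finset.mem_compl.mp i.property), s.property]
  rw [wext_of_card f hc]

lemma koszulD_zero (xx : Fin n → A) (q : ℕ) (s : {s : Finset (Fin n) // s.card = q}) :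
    koszulD xx q (0 : KoszulDeg A n (q+1)) s = 0 := by
  simp [koszulD]

lemma koszulD_add (xx : Fin n → A) (q : ℕ) (f g : KoszulDeg A n (q+1))
    (s : {s : Finset (Fin n) // s.card = q}) :
    koszulD xx q (fun u => f u + g u) s = koszulD xx q f s + koszulD xx q g s := by
  unfold koszulD
  rw [← Finset.sum_add_distrib]
  exact Finset.sum_congr rfl fun i _ => by ring

lemma koszulD_smul (xx : Fin n → A) (q : ℕ) (c : A) (f : KoszulDeg A n (q+1))
    (s : {s : Finset (Fin n) // s.card = q}) :
    koszulD xx q (fun u => c * f u) s = c * koszulD xx q f s := by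
  unfold koszulD
  rw [Finset.mul_sum]
  exact Finset.sum_congr rfl fun i _ => by ring

lemma koszulD_finsum {ι : Type*} (xx : Fin n → A) (q : ℕ) (t : Finset ι)
    (F : ι → KoszulDeg A n (q+1)) (s : {s : Finset (Fin n) // s.card = q}) :
    koszulD xx q (fun u => ∑ k ∈ t, F k u) s = ∑ k ∈ t, koszulD xx q (F k) s := by
  unfold koszulD
  simp_rw [Finset.mul_sum]
  exact Finset.sum_comm

lemma mu_mu (aa : Fin n → A) (e e' q : ℕ) (f : KoszulDeg A n q)
    (s : {s : Finset (Fin n) // s.card = q}) :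
    koszulTransition aa e q (koszulTransition aa e' q f) s
      = koszulTransition aa (e + e') q f s := by
  unfold koszulTransition
  rw [← mul_assoc, ← Finset.prod_mul_distrib]
  simp_rw [← pow_add]

lemma mu_smul (aa : Fin n → A) (e q : ℕ) (c : A) (f : KoszulDeg A n q)
    (s : {s : Finset (Fin n) // s.card = q}) :
    koszulTransition aa e q (fun u => c * f u) s = c * koszulTransition aa e q f s := by
  unfold koszulTransition; ring

lemma mu_add (aa : Fin n → A) (e q : ℕ) (f g : KoszulDeg A n q)
    (s : {s : Finset (Fin n) // s.card = q}) :
    koszulTransition aa e q (fun u => f u + g u) s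
      = koszulTransition aa e q f s + koszulTransition aa e q g s := by
  unfold koszulTransition; ring

lemma koszulD_mu (aa : Fin n → A) (i e q : ℕ) (f : KoszulDeg A n (q+1))
    (s : {s : Finset (Fin n) // s.card = q}) :
    koszulD (fun k => aa k ^ i) q (koszulTransition aa e (q+1) f) s
      = koszulTransition aa e q (koszulD (fun k => aa k ^ (e + i)) q f) s := by
  unfold koszulD koszulTransition
  rw [Finset.mul_sum]
  refine Finset.sum_congr rfl fun x _ => ?_
  rw [Finset.prod_insert (Finset.mem_compl.mp x.property)]
  simp only [pow_add]
  ring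

end helpers

section snocsec
variable {A : Type*} [CommRing A] {n : ℕ}

def csEmb (n : ℕ) : Fin n ↪ Fin (n+1) := ⟨Fin.castSucc, Fin.castSucc_injective n⟩

lemma csEmb_apply (i : Fin n) : csEmb n i = Fin.castSucc i := rfl

lemma last_not_mem_map (s : Finset (Fin n)) : Fin.last n ∉ s.map (csEmb n) := by
  intro h
  obtain ⟨k, _, hk⟩ := Finset.mem_map.mp h
  exact (Fin.castSucc_lt_last k).ne hk

lemma compl_map_cs (s : Finset (Fin n)) :
    (s.map (csEmb n))ᶜ = insert (Fin.last n) ((sᶜ).map (csEmb n)) := by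
  ext x
  simp only [Finset.mem_compl, Finset.mem_insert]
  constructor
  · intro h
    by_cases hx : x = Fin.last n
    · exact Or.inl hx
    · obtain ⟨k, rfl⟩ := Fin.exists_castSucc_eq.mpr hx
      exact Or.inr (Finset.mem_map.mpr ⟨k,
        Finset.mem_compl.mpr fun hk => h (Finset.mem_map.mpr ⟨k, hk, rfl⟩), rfl⟩)
  · rintro (rfl | h)
    · exact last_not_mem_map s
    · intro hx
      obtain ⟨k, hk, rfl⟩ := Finset.mem_map.mp h
      obtain ⟨m, hm, hmk⟩ := Finset.mem_map.mp hx
      obtain rfl : m = k := Fin.castSucc_injective n hmk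
      exact Finset.mem_compl.mp hk hm

lemma compl_insert_last (s : Finset (Fin n)) :
    (insert (Fin.last n) (s.map (csEmb n)))ᶜ = (sᶜ).map (csEmb n) := by
  rw [← compl_compl ((sᶜ).map (csEmb n)), compl_map_cs, compl_compl]

def dn (S : Finset (Fin (n+1))) : Finset (Fin n) :=
  Finset.univ.filter (fun k => Fin.castSucc k ∈ S)

lemma dn_map (t : Finset (Fin n)) : dn (t.map (csEmb n)) = t := by
  ext k
  simp [dn, csEmb, (Fin.castSucc_injective n).eq_iff]

lemma map_dn_of_not_mem {S : Finset (Fin (n+1))} (h : Fin.last n ∉ S) :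
    (dn S).map (csEmb n) = S := by
  ext x
  constructor
  · intro hx
    obtain ⟨k, hk, rfl⟩ := Finset.mem_map.mp hx
    exact (Finset.mem_filter.mp hk).2
  · intro hx
    have hxl : x ≠ Fin.last n := fun e => h (e ▸ hx)
    obtain ⟨k, rfl⟩ := Fin.exists_castSucc_eq.mpr hxl
    exact Finset.mem_map.mpr ⟨k, Finset.mem_filter.mpr ⟨Finset.mem_univ _, hx⟩, rfl⟩

lemma dn_insert_last (S : Finset (Fin (n+1))) : dn (insert (Fin.last n) S) = dn S := by
  ext k
  simp only [dn, Finset.mem_filter, Finset.mem_univ, true_and, Finset.mem_insert]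
  constructor
  · rintro (h | h)
    · exact absurd h (Fin.castSucc_lt_last k).ne
    · exact h
  · exact Or.inr

lemma insert_last_map_dn {S : Finset (Fin (n+1))} (h : Fin.last n ∈ S) :
    insert (Fin.last n) ((dn S).map (csEmb n)) = S := by
  have h2 : Fin.last n ∉ S.erase (Fin.last n) := Finset.notMem_erase _ _
  have h3 : dn S = dn (S.erase (Fin.last n)) := by
    conv_lhs => rw [← Finset.insert_erase h]
    rw [dn_insert_last]
  rw [h3, map_dn_of_not_mem h2, Finset.insert_erase h]

lemma card_dn_of_not_mem {S : Finset (Fin (n+1))} (h : Fin.last n ∉ S) :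
    (dn S).card = S.card := by
  conv_rhs => rw [← map_dn_of_not_mem h]
  rw [Finset.card_map]

lemma card_dn_of_mem {S : Finset (Fin (n+1))} (h : Fin.last n ∈ S) :
    (dn S).card + 1 = S.card := by
  conv_rhs => rw [← insert_last_map_dn h]
  rw [Finset.card_insert_of_notMem (last_not_mem_map _), Finset.card_map]

noncomputable def uC {A : Type*} {q : ℕ} (f : KoszulDeg A (n+1) q) : KoszulDeg A n q :=
  fun t => f ⟨t.val.map (csEmb n), by rw [Finset.card_map, t.property]⟩

noncomputable def vC {A : Type*} {q : ℕ} (f : KoszulDeg A (n+1) (q+1)) : KoszulDeg A n q :=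
  fun t => f ⟨insert (Fin.last n) (t.val.map (csEmb n)), by
    rw [Finset.card_insert_of_notMem (last_not_mem_map _), Finset.card_map, t.property]⟩

lemma wext_map {q : ℕ} (f : KoszulDeg A (n+1) q) (t : Finset (Fin n)) :
    wext f (t.map (csEmb n)) = wext (uC f) t := by
  unfold wext
  by_cases h : t.card = q
  · rw [dif_pos (show (t.map (csEmb n)).card = q by rw [Finset.card_map, h]), dif_pos h]; rfl
  · rw [dif_neg (show ¬(t.map (csEmb n)).card = q by rw [Finset.card_map]; exact h), dif_neg h]

lemma wext_insert_last {q : ℕ} (f : KoszulDeg A (n+1) (q+1)) (t : Finset (Fin n)) :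
    wext f (insert (Fin.last n) (t.map (csEmb n))) = wext (vC f) t := by
  unfold wext
  have hc : (insert (Fin.last n) (t.map (csEmb n))).card = t.card + 1 := by
    rw [Finset.card_insert_of_notMem (last_not_mem_map _), Finset.card_map]
  by_cases h : t.card = q
  · rw [dif_pos (by rw [hc, h]), dif_pos h]; rfl
  · rw [dif_neg (by rw [hc]; exact fun hh => h (Nat.succ_injective hh)), dif_neg h]

noncomputable def bld {q : ℕ} (p : KoszulDeg A n (q+1)) (w : KoszulDeg A n q) :
    KoszulDeg A (n+1) (q+1) :=
  fun s => if Fin.last n ∈ s.val then wext w (dn s.val) else wext p (dn s.val)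

lemma uC_bld {q : ℕ} (p : KoszulDeg A n (q+1)) (w : KoszulDeg A n q) :
    uC (bld p w) = p := by
  funext t
  show bld p w _ = p t
  rw [bld, if_neg (last_not_mem_map _), dn_map, wext_of_card p t.property]

lemma vC_bld {q : ℕ} (p : KoszulDeg A n (q+1)) (w : KoszulDeg A n q) :
    vC (bld p w) = w := by
  funext t
  show bld p w _ = w t
  rw [bld, if_pos (Finset.mem_insert_self _ _), dn_insert_last, dn_map,
    wext_of_card w t.property]

lemma filter_lt_cs (s : Finset (Fin n)) (i : Fin n) :
    ((s.map (csEmb n)).filter (fun k => k < csEmb n i)).card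
      = (s.filter (fun k => k < i)).card := by
  rw [Finset.filter_map, Finset.card_map]
  congr 1

lemma filter_lt_last (s : Finset (Fin n)) :
    ((s.map (csEmb n)).filter (fun k => k < Fin.last n)) = s.map (csEmb n) := by
  refine Finset.filter_true_of_mem fun x hx => ?_
  obtain ⟨k, _, rfl⟩ := Finset.mem_map.mp hx
  exact Fin.castSucc_lt_last k

lemma koszulD_cs (xx : Fin (n+1) → A) (q : ℕ) (f : KoszulDeg A (n+1) (q+1))
    (t : Finset (Fin n)) (ht : t.card = q) :
    koszulD xx q f ⟨t.map (csEmb n), by rw [Finset.card_map, ht]⟩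
      = koszulD (fun k => xx (Fin.castSucc k)) q (uC f) ⟨t, ht⟩
        + (-1 : A) ^ q * xx (Fin.last n) * vC f ⟨t, ht⟩ := by
  rw [koszulD_apply, koszulD_apply]
  show ∑ i ∈ (t.map (csEmb n))ᶜ,
      (-1 : A) ^ ((t.map (csEmb n)).filter (fun k => k < i)).card * xx i
        * wext f (insert i (t.map (csEmb n))) = _
  rw [compl_map_cs, Finset.sum_insert (last_not_mem_map _), Finset.sum_map, add_comm]
  congr 1
  · refine Finset.sum_congr rfl fun i hi => ?_
    show (-1:A) ^ ((t.map (csEmb n)).filter (fun k => k < csEmb n i)).card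
        * xx (csEmb n i) * wext f (insert (csEmb n i) (t.map (csEmb n)))
        = (-1:A) ^ (t.filter (fun k => k < i)).card * xx (Fin.castSucc i)
          * wext (uC f) (insert i t)
    rw [filter_lt_cs, ← Finset.map_insert (csEmb n) i t, wext_map]
    rfl
  · show (-1:A) ^ ((t.map (csEmb n)).filter (fun k => k < Fin.last n)).card
        * xx (Fin.last n) * wext f (insert (Fin.last n) (t.map (csEmb n)))
        = (-1:A) ^ q * xx (Fin.last n) * vC f ⟨t, ht⟩
    rw [filter_lt_last, Finset.card_map, ht, wext_insert_last, wext_of_card _ ht]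

lemma koszulD_last (xx : Fin (n+1) → A) (q : ℕ) (f : KoszulDeg A (n+1) (q+2))
    (t : Finset (Fin n)) (ht : t.card = q) :
    koszulD xx (q+1) f ⟨insert (Fin.last n) (t.map (csEmb n)), by
        rw [Finset.card_insert_of_notMem (last_not_mem_map _), Finset.card_map, ht]⟩
      = koszulD (fun k => xx (Fin.castSucc k)) q (vC f) ⟨t, ht⟩ := by
  rw [koszulD_apply, koszulD_apply]
  show ∑ i ∈ (insert (Fin.last n) (t.map (csEmb n)))ᶜ,
      (-1 : A) ^ ((insert (Fin.last n) (t.map (csEmb n))).filter (fun k => k < i)).card * xx i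
        * wext f (insert i (insert (Fin.last n) (t.map (csEmb n)))) = _
  rw [compl_insert_last, Finset.sum_map]
  refine Finset.sum_congr rfl fun i hi => ?_
  show (-1:A) ^ ((insert (Fin.last n) (t.map (csEmb n))).filter
      (fun k => k < csEmb n i)).card * xx (csEmb n i)
      * wext f (insert (csEmb n i) (insert (Fin.last n) (t.map (csEmb n))))
      = (-1:A) ^ (t.filter (fun k => k < i)).card * xx (Fin.castSucc i)
        * wext (vC f) (insert i t)
  rw [Finset.filter_insert,
    if_neg (show ¬ Fin.last n < csEmb n i from fun h => absurd (Fin.le_last (csEmb n i)) (not_le.mpr h)),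
    filter_lt_cs, Finset.insert_comm, ← Finset.map_insert (csEmb n) i t, wext_insert_last]
  rfl

lemma mu_snoc_map (aa : Fin (n+1) → A) (e q : ℕ) (f : KoszulDeg A (n+1) q)
    (t : Finset (Fin n)) (ht : t.card = q) :
    koszulTransition aa e q f ⟨t.map (csEmb n), by rw [Finset.card_map, ht]⟩
      = koszulTransition (fun k => aa (Fin.castSucc k)) e q (uC f) ⟨t, ht⟩ := by
  unfold koszulTransition
  show (∏ k ∈ t.map (csEmb n), aa k ^ e) * f ⟨t.map (csEmb n), _⟩ = _
  rw [Finset.prod_map]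
  rfl

lemma mu_snoc_last (aa : Fin (n+1) → A) (e q : ℕ) (f : KoszulDeg A (n+1) (q+1))
    (t : Finset (Fin n)) (ht : t.card = q) :
    koszulTransition aa e (q+1) f ⟨insert (Fin.last n) (t.map (csEmb n)), by
        rw [Finset.card_insert_of_notMem (last_not_mem_map _), Finset.card_map, ht]⟩
      = aa (Fin.last n) ^ e
        * koszulTransition (fun k => aa (Fin.castSucc k)) e q (vC f) ⟨t, ht⟩ := by
  unfold koszulTransition
  show (∏ k ∈ insert (Fin.last n) (t.map (csEmb n)), aa k ^ e) * f ⟨_, _⟩ = _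
  rw [Finset.prod_insert (last_not_mem_map _), Finset.prod_map, mul_assoc]
  rfl

end snocsec

section homotopy
variable {A : Type*} [CommRing A] {n : ℕ}

lemma neg_one_sq_pow (m : ℕ) : (-1:A)^m * (-1:A)^m = 1 := by
  rw [← pow_add]
  exact Even.neg_one_pow ⟨m, rfl⟩

lemma compl_erase {α : Type*} [Fintype α] [DecidableEq α] (s : Finset α) (k : α) :
    (s.erase k)ᶜ = insert k sᶜ := by
  ext i
  simp only [Finset.mem_compl, Finset.mem_erase, Finset.mem_insert, not_and_or, not_not]

/-- the wedge-with-`e_k` operator, the standard homotopy showing `x_k` acts null-homotopically. -/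
noncomputable def Eop (k : Fin n) {q : ℕ} (f : KoszulDeg A n q) : KoszulDeg A n (q+1) :=
  fun s => if k ∈ s.val
    then (-1:A) ^ ((s.val.filter (fun l => l < k)).card) * wext f (s.val.erase k) else 0

lemma koszulD_Eop (xx : Fin n → A) (q : ℕ) (k : Fin n) (f : KoszulDeg A n (q+1))
    (s : {s : Finset (Fin n) // s.card = q+1}) :
    koszulD xx (q+1) (Eop k f) s + Eop k (koszulD xx q f) s = xx k * f s := by
  by_cases hk : k ∈ s.val
  · -- main case : k ∈ s
    have hcard_t : (s.val.erase k).card = q := by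
      rw [Finset.card_erase_of_mem hk, s.property]
      rfl
    have hEd : Eop k (koszulD xx q f) s
        = (-1:A) ^ ((s.val.filter (fun l => l < k)).card)
          * koszulD xx q f ⟨s.val.erase k, hcard_t⟩ := by
      rw [Eop, if_pos hk, wext_of_card _ hcard_t]
    rw [hEd, koszulD_apply xx q f ⟨s.val.erase k, hcard_t⟩, koszulD_apply]
    show (∑ i ∈ (s.val)ᶜ, (-1:A) ^ ((s.val.filter (fun l => l < i)).card) * xx i
        * wext (Eop k f) (insert i s.val)) + _ = _
    have hknc : k ∉ (s.val)ᶜ := by simp [hk]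
    rw [show ((⟨s.val.erase k, hcard_t⟩ : {s : Finset (Fin n) // s.card = q}) : Finset (Fin n))
        = s.val.erase k from rfl, compl_erase, Finset.sum_insert hknc]
    have hterm : (-1:A) ^ (((s.val.erase k).filter (fun l => l < k)).card) * xx k
        * wext f (insert k (s.val.erase k)) = (-1:A) ^ ((s.val.filter (fun l => l < k)).card)
          * xx k * f s := by
      have h1 : (s.val.erase k).filter (fun l => l < k) = s.val.filter (fun l => l < k) := by
        rw [Finset.filter_erase, Finset.erase_eq_of_notMem (by simp)]
      rw [h1, Finset.insert_erase hk, wext_of_card _ s.property]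
    rw [hterm, mul_add]
    have hz : (∑ i ∈ (s.val)ᶜ, (-1:A) ^ ((s.val.filter (fun l => l < i)).card) * xx i
          * wext (Eop k f) (insert i s.val))
        + (-1:A) ^ ((s.val.filter (fun l => l < k)).card)
          * ∑ i ∈ (s.val)ᶜ, (-1:A) ^ (((s.val.erase k).filter (fun l => l < i)).card) * xx i
            * wext f (insert i (s.val.erase k)) = 0 := by
      rw [Finset.mul_sum, ← Finset.sum_add_distrib]
      refine Finset.sum_eq_zero fun i hi => ?_
      have hins : i ∉ s.val := Finset.mem_compl.mp hi
      have hik : i ≠ k := fun e => hins (e ▸ hk)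
      have hcins : (insert i s.val).card = q + 2 := by
        rw [Finset.card_insert_of_notMem hins, s.property]
      have hwE : wext (Eop k f) (insert i s.val)
          = (-1:A) ^ (((insert i s.val).filter (fun l => l < k)).card)
            * wext f (insert i (s.val.erase k)) := by
        rw [wext_of_card _ hcins]
        show (if k ∈ insert i s.val then _ else 0) = _
        rw [if_pos (Finset.mem_insert_of_mem hk), Finset.erase_insert_of_ne hik]
      rw [hwE]
      rcases lt_or_gt_of_ne hik with hik' | hki'
      · have hg : (s.val.erase k).filter (fun l => l < i) = s.val.filter (fun l => l < i) := by
          rw [Finset.filter_erase, Finset.erase_eq_of_notMem (by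
            simp only [Finset.mem_filter, not_and]
            exact fun _ h => absurd (h.trans hik') (lt_irrefl k))]
        have hbc : ((insert i s.val).filter (fun l => l < k)).card
            = (s.val.filter (fun l => l < k)).card + 1 := by
          rw [Finset.filter_insert, if_pos hik',
            Finset.card_insert_of_notMem (fun hmem => hins (Finset.mem_filter.mp hmem).1)]
        rw [hbc, hg, pow_succ]
        ring
      · have hkmem : k ∈ s.val.filter (fun l => l < i) := Finset.mem_filter.mpr ⟨hk, hki'⟩
        have hg : ((s.val.erase k).filter (fun l => l < i)).card + 1
            = (s.val.filter (fun l => l < i)).card := by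
          rw [Finset.filter_erase, Finset.card_erase_add_one hkmem]
        have hb : (insert i s.val).filter (fun l => l < k) = s.val.filter (fun l => l < k) := by
          rw [Finset.filter_insert, if_neg (fun h => absurd (h.trans hki') (lt_irrefl i))]
        rw [hb, ← hg, pow_succ]
        ring
    linear_combination hz + (xx k * f s) * neg_one_sq_pow (A := A)
      ((s.val.filter (fun l => l < k)).card)
  · -- easy case : k ∉ s
    have h2 : Eop k (koszulD xx q f) s = 0 := if_neg hk
    rw [h2, add_zero, koszulD_apply]
    have hkc : k ∈ (s.val)ᶜ := Finset.mem_compl.mpr hk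
    rw [Finset.sum_eq_single k (fun i hi hik => ?_) (fun habs => absurd hkc habs)]
    · have hcins : (insert k s.val).card = q + 2 := by
        rw [Finset.card_insert_of_notMem hk, s.property]
      have hwE : wext (Eop k f) (insert k s.val)
          = (-1:A) ^ ((s.val.filter (fun l => l < k)).card) * f s := by
        rw [wext_of_card _ hcins]
        show (if k ∈ insert k s.val then _ else 0) = _
        rw [if_pos (Finset.mem_insert_self _ _), Finset.filter_insert,
          if_neg (lt_irrefl k), Finset.erase_insert hk, wext_of_card _ s.property]
      rw [hwE]
      linear_combination (xx k * f s) * neg_one_sq_pow (A := A)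
        ((s.val.filter (fun l => l < k)).card)
    · have hins : i ∉ s.val := Finset.mem_compl.mp hi
      have hcins : (insert i s.val).card = q + 2 := by
        rw [Finset.card_insert_of_notMem hins, s.property]
      have hwE : wext (Eop k f) (insert i s.val) = 0 := by
        rw [wext_of_card _ hcins]
        show (if k ∈ insert i s.val then _ else 0) = 0
        rw [if_neg]
        intro hmem
        rcases Finset.mem_insert.mp hmem with h | h
        · exact hik h.symm
        · exact hk h
      rw [hwE, mul_zero]

end homotopy

section reversal
variable {A : Type*} [CommRing A] {n : ℕ}

def rvEmb (n : ℕ) : Fin n ↪ Fin n := ⟨Fin.rev, Fin.rev_injective⟩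

noncomputable def eps (A : Type*) [CommRing A] : ℕ → A
  | 0 => 1
  | (q+1) => eps A q * (-1:A)^q

lemma eps_sq (q : ℕ) : eps A q * eps A q = 1 := by
  induction q with
  | zero => simp [eps]
  | succ q ih =>
      show (eps A q * (-1:A)^q) * (eps A q * (-1:A)^q) = 1
      calc (eps A q * (-1:A)^q) * (eps A q * (-1:A)^q)
          = (eps A q * eps A q) * ((-1:A)^q * (-1:A)^q) := by ring
        _ = 1 := by rw [ih, neg_one_sq_pow, one_mul]

/-- the chain isomorphism reversing the order of the sequence. -/
noncomputable def Phi {q : ℕ} (f : KoszulDeg A n q) : KoszulDeg A n q :=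
  fun s => eps A q * f ⟨s.val.map (rvEmb n), by rw [Finset.card_map, s.property]⟩

lemma compl_map_rv (s : Finset (Fin n)) : (s.map (rvEmb n))ᶜ = (sᶜ).map (rvEmb n) := by
  ext x
  rw [Finset.mem_compl, Finset.mem_map, Finset.mem_map]
  constructor
  · intro h
    exact ⟨x.rev, Finset.mem_compl.mpr (fun hx => h ⟨x.rev, hx, Fin.rev_rev x⟩), Fin.rev_rev x⟩
  · rintro ⟨a, ha, rfl⟩ ⟨b, hb, hba⟩
    obtain rfl : b = a := Fin.rev_injective hba
    exact Finset.mem_compl.mp ha hb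

lemma map_map_rv (s : Finset (Fin n)) : (s.map (rvEmb n)).map (rvEmb n) = s := by
  have h : (rvEmb n).trans (rvEmb n) = Function.Embedding.refl _ := by
    ext a
    show ((a.rev).rev).val = a.val
    rw [Fin.rev_rev]
  rw [Finset.map_map, h, Finset.map_refl]

lemma filter_lt_rev_card {s : Finset (Fin n)} {i : Fin n} (hi : i ∉ s) :
    ((s.map (rvEmb n)).filter (fun k => k < rvEmb n i)).card
      + (s.filter (fun k => k < i)).card = s.card := by
  rw [Finset.filter_map, Finset.card_map]
  have hconv : (s.filter ((fun k => k < rvEmb n i) ∘ ⇑(rvEmb n))) = s.filter (fun k => ¬ k < i) := by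
    refine Finset.filter_congr fun k hk => ?_
    show Fin.rev k < Fin.rev i ↔ ¬ k < i
    rw [Fin.rev_lt_rev]
    exact ⟨fun h => not_lt.mpr h.le,
      fun h => lt_of_le_of_ne (not_lt.mp h) (fun e => hi (e ▸ hk))⟩
  rw [hconv, add_comm]
  exact Finset.card_filter_add_card_filter_not _

lemma koszulD_Phi' (xx yy : Fin n → A) (hxy : ∀ k, yy k = xx (Fin.rev k)) (q : ℕ)
    (f : KoszulDeg A n (q+1)) (s : {s : Finset (Fin n) // s.card = q}) :
    koszulD xx q (Phi f) s = Phi (koszulD yy q f) s := by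
  rw [koszulD_apply]
  show _ = eps A q * koszulD yy q f ⟨s.val.map (rvEmb n), by rw [Finset.card_map, s.property]⟩
  rw [koszulD_apply]
  show _ = eps A q * ∑ i ∈ (s.val.map (rvEmb n))ᶜ,
      (-1:A) ^ (((s.val.map (rvEmb n)).filter (fun k => k < i)).card) * yy i
        * wext f (insert i (s.val.map (rvEmb n)))
  rw [compl_map_rv, Finset.sum_map, Finset.mul_sum]
  refine Finset.sum_congr rfl fun i hi => ?_
  have hins : i ∉ s.val := Finset.mem_compl.mp hi
  have hci : (insert i s.val).card = q + 1 := by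
    rw [Finset.card_insert_of_notMem hins, s.property]
  have hW : wext (Phi f) (insert i s.val)
      = eps A (q+1) * wext f ((insert i s.val).map (rvEmb n)) := by
    rw [wext_of_card _ hci, wext_of_card _ (by rw [Finset.card_map, hci])]
    rfl
  rw [hW, Finset.map_insert]
  have hrr : yy (rvEmb n i) = xx i := by
    show yy (Fin.rev i) = xx i
    rw [hxy, Fin.rev_rev]
  rw [hrr]
  have hdg : ((s.val.map (rvEmb n)).filter (fun k => k < rvEmb n i)).card
      + (s.val.filter (fun k => k < i)).card = q := by
    rw [filter_lt_rev_card hins, s.property]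
  have hsign : (-1:A) ^ ((s.val.filter (fun k => k < i)).card) * eps A (q+1)
      = eps A q * (-1:A) ^ (((s.val.map (rvEmb n)).filter (fun k => k < rvEmb n i)).card) := by
    rw [show eps A (q+1) = eps A q * (-1:A)^q from rfl,
      show (-1:A)^q = (-1:A) ^ (((s.val.map (rvEmb n)).filter (fun k => k < rvEmb n i)).card)
        * (-1:A) ^ ((s.val.filter (fun k => k < i)).card) from by rw [← pow_add, hdg]]
    linear_combination (eps A q * (-1:A) ^ (((s.val.map (rvEmb n)).filter
      (fun k => k < rvEmb n i)).card))
      * neg_one_sq_pow (A := A) ((s.val.filter (fun k => k < i)).card)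
  linear_combination (xx i * wext f (insert (rvEmb n i) (s.val.map (rvEmb n)))) * hsign

lemma Phi_Phi {q : ℕ} (f : KoszulDeg A n q) (s : {s : Finset (Fin n) // s.card = q}) :
    Phi (Phi f) s = f s := by
  show eps A q * (eps A q * f ⟨(s.val.map (rvEmb n)).map (rvEmb n), _⟩) = f s
  rw [← mul_assoc, eps_sq, one_mul]
  exact congrArg f (Subtype.ext (map_map_rv s.val))

lemma Phi_mu (aa : Fin n → A) (e q : ℕ) (f : KoszulDeg A n q)
    (s : {s : Finset (Fin n) // s.card = q}) :
    Phi (koszulTransition aa e q f) s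
      = koszulTransition (fun k => aa (Fin.rev k)) e q (Phi f) s := by
  show eps A q * ((∏ k ∈ s.val.map (rvEmb n), aa k ^ e) * f ⟨s.val.map (rvEmb n), _⟩)
      = (∏ k ∈ s.val, aa (Fin.rev k) ^ e) * (eps A q * f ⟨s.val.map (rvEmb n), _⟩)
  rw [Finset.prod_map]
  show eps A q * ((∏ k ∈ s.val, aa (Fin.rev k) ^ e) * _) = _
  ring

lemma wpr_rev {aa : Fin n → A} (ha : IsWeaklyProregular aa) :
    IsWeaklyProregular (fun k => aa (Fin.rev k)) := by
  intro q i
  obtain ⟨j, hj, H⟩ := ha q i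
  refine ⟨j, hj, fun f hf => ?_⟩
  have hf' : koszulD (fun k => aa (Fin.rev k) ^ j) q f = 0 := hf
  have hF : koszulD (fun k => aa k ^ j) q (Phi f) = 0 := by
    funext s
    rw [koszulD_Phi' (fun k => aa k ^ j) (fun k => aa (Fin.rev k) ^ j) (fun k => rfl) q f s,
      hf']
    simp [Phi]
  obtain ⟨g, hg⟩ := H (Phi f) hF
  refine ⟨Phi g, ?_⟩
  funext s
  have step1 : koszulD (fun k => (fun k => aa (Fin.rev k)) k ^ i) (q+1) (Phi g) s
      = Phi (koszulD (fun k => aa k ^ i) (q+1) g) s := by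
    refine koszulD_Phi' _ _ (fun k => ?_) (q+1) g s
    show aa k ^ i = aa (Fin.rev (Fin.rev k)) ^ i
    rw [Fin.rev_rev]
  rw [step1, hg, Phi_mu, koszulTransition]
  show (∏ k ∈ s.val, aa (Fin.rev k) ^ (j-i)) * Phi (Phi f) s
      = (∏ k ∈ s.val, (fun k => aa (Fin.rev k)) k ^ (j-i)) * f s
  rw [Phi_Phi]

end reversal

section radsec
variable {A : Type*} [CommRing A] {n : ℕ}

lemma rad_le_pow (cc : Fin n → A) (e : ℕ) :
    (Ideal.span (Set.range cc)).radical
      ≤ (Ideal.span (Set.range fun k => cc k ^ e)).radical := by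
  have h1 : Ideal.span (Set.range cc)
      ≤ (Ideal.span (Set.range fun k => cc k ^ e)).radical := by
    rw [Ideal.span_le]
    rintro x ⟨k, rfl⟩
    exact ⟨e, Ideal.subset_span ⟨k, rfl⟩⟩
  calc (Ideal.span (Set.range cc)).radical
      ≤ ((Ideal.span (Set.range fun k => cc k ^ e)).radical).radical := Ideal.radical_mono h1
    _ = _ := Ideal.radical_idem _

lemma exists_pow_mem {cc : Fin n → A} {b : A}
    (hb : b ∈ (Ideal.span (Set.range cc)).radical) (e : ℕ) :
    ∃ (M : ℕ) (r : Fin n → A), (∑ k, r k * cc k ^ e) = b ^ M := by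
  obtain ⟨M, hM⟩ := rad_le_pow cc e hb
  obtain ⟨r, hr⟩ := (Submodule.mem_span_range_iff_exists_fun A).mp hM
  exact ⟨M, r, by simpa [smul_eq_mul] using hr⟩

end radsec

section extractsec
variable {A : Type*} [CommRing A] {n : ℕ}

lemma extract_E1 (cc : Fin n → A) (b : A) (q j : ℕ) (f : KoszulDeg A (n+1) (q+1))
    (hf : koszulD (fun k => Fin.snoc cc b k ^ j) q f = 0)
    (t : {t : Finset (Fin n) // t.card = q}) :
    koszulD (fun k => cc k ^ j) q (uC f) t + (-1:A)^q * b^j * vC f t = 0 := by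
  have h := congrFun hf
    ⟨t.val.map (csEmb n), by rw [Finset.card_map, t.property]⟩
  have h2 := (koszulD_cs (fun k => Fin.snoc cc b k ^ j) q f t.val t.property).symm.trans h
  simpa only [Fin.snoc_castSucc, Fin.snoc_last, Pi.zero_apply] using h2

lemma extract_E2 (cc : Fin n → A) (b : A) (q' j : ℕ) (f : KoszulDeg A (n+1) (q'+2))
    (hf : koszulD (fun k => Fin.snoc cc b k ^ j) (q'+1) f = 0) :
    koszulD (fun k => cc k ^ j) q' (vC f) = 0 := by
  funext t
  have h := congrFun hf
    ⟨insert (Fin.last n) (t.val.map (csEmb n)), by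
      rw [Finset.card_insert_of_notMem (last_not_mem_map _), Finset.card_map, t.property]⟩
  have h2 := (koszulD_last (fun k => Fin.snoc cc b k ^ j) q' f t.val t.property).symm.trans h
  simpa only [Fin.snoc_castSucc, Pi.zero_apply] using h2

end extractsec

section coresec
variable {A : Type*} [CommRing A] {n : ℕ}

lemma wpr_snoc_core (cc : Fin n → A) (b : A) (q i i₁ j : ℕ)
    (hii₁ : i ≤ i₁) (hj : i₁ ≤ j)
    (P1 : ∀ U : KoszulDeg A n (q+1), koszulD (fun k => cc k ^ i₁) q U = 0 →
      ∃ p : KoszulDeg A n (q+2), koszulD (fun k => cc k ^ i) (q+1) p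
        = koszulTransition cc (i₁ - i) (q+1) U)
    (f : KoszulDeg A (n+1) (q+1))
    (hE1 : ∀ t : {t : Finset (Fin n) // t.card = q},
      koszulD (fun k => cc k ^ j) q (uC f) t + (-1:A)^q * b^j * vC f t = 0)
    (w₁ : KoszulDeg A n (q+1))
    (hw₁ : ∀ t : {t : Finset (Fin n) // t.card = q},
      koszulD (fun k => cc k ^ i₁) q w₁ t
        = b^(j-i₁) * koszulTransition cc (j - i₁) q (vC f) t) :
    ∃ g : KoszulDeg A (n+1) (q+2),
      koszulD (fun k => Fin.snoc cc b k ^ i) (q+1) g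
        = koszulTransition (Fin.snoc cc b) (j-i) (q+1) f := by
  have hU : koszulD (fun k => cc k ^ i₁) q
      (fun t => koszulTransition cc (j - i₁) (q+1) (uC f) t + (-1:A)^q * b^(i₁) * w₁ t)
      = 0 := by
    funext t
    rw [Pi.zero_apply, koszulD_add, koszulD_smul, koszulD_mu,
      show j - i₁ + i₁ = j from Nat.sub_add_cancel hj, hw₁ t]
    have hdu : koszulD (fun k => cc k ^ j) q (uC f) t = -((-1:A)^q * b^j * vC f t) :=
      eq_neg_of_add_eq_zero_left (hE1 t)
    rw [koszulTransition, hdu, koszulTransition,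
      show b ^ j = b ^ i₁ * b ^ (j - i₁) from by rw [← pow_add, Nat.add_sub_cancel' hj]]
    ring
  obtain ⟨p, hp⟩ := P1 _ hU
  refine ⟨bld p (fun t => b^(i₁ - i) * koszulTransition cc (i₁ - i) (q+1) w₁ t), ?_⟩
  funext S
  by_cases hl : Fin.last n ∈ S.val
  · -- subsets containing the last index
    have htc : (dn S.val).card = q := by
      have h0 := card_dn_of_mem hl
      rw [S.property] at h0
      exact Nat.succ_injective h0
    have hS : S = ⟨insert (Fin.last n) ((dn S.val).map (csEmb n)), by
        rw [Finset.card_insert_of_notMem (last_not_mem_map _), Finset.card_map, htc]⟩ :=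
      Subtype.ext (insert_last_map_dn hl).symm
    rw [hS, koszulD_last _ q _ (dn S.val) htc,
      mu_snoc_last (Fin.snoc cc b) (j-i) q f (dn S.val) htc]
    simp only [Fin.snoc_castSucc, Fin.snoc_last]
    rw [vC_bld]
    rw [koszulD_smul, koszulD_mu, show i₁ - i + i = i₁ from Nat.sub_add_cancel hii₁]
    rw [koszulTransition, hw₁ ⟨dn S.val, htc⟩, koszulTransition, koszulTransition]
    have hb2 : b ^ (i₁ - i) * b ^ (j - i₁) = b ^ (j - i) := by
      rw [← pow_add]
      congr 1
      omega
    have hprod : (∏ k ∈ dn S.val, cc k ^ (i₁ - i)) * (∏ k ∈ dn S.val, cc k ^ (j - i₁))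
        = ∏ k ∈ dn S.val, cc k ^ (j - i) := by
      rw [← Finset.prod_mul_distrib]
      refine Finset.prod_congr rfl fun k _ => ?_
      rw [← pow_add]
      congr 1
      omega
    linear_combination (b ^ (i₁ - i) * b ^ (j - i₁) * vC f ⟨dn S.val, htc⟩) * hprod
      + ((∏ k ∈ dn S.val, cc k ^ (j - i)) * vC f ⟨dn S.val, htc⟩) * hb2
  · -- subsets not containing the last index
    have htc : (dn S.val).card = q + 1 := by rw [card_dn_of_not_mem hl, S.property]
    have hS : S = ⟨(dn S.val).map (csEmb n), by rw [Finset.card_map, htc]⟩ :=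
      Subtype.ext (map_dn_of_not_mem hl).symm
    rw [hS, koszulD_cs _ (q+1) _ (dn S.val) htc,
      mu_snoc_map (Fin.snoc cc b) (j-i) (q+1) f (dn S.val) htc]
    simp only [Fin.snoc_castSucc, Fin.snoc_last]
    rw [uC_bld, vC_bld]
    rw [hp]
    rw [koszulTransition, koszulTransition, koszulTransition, koszulTransition]
    have hb2 : b ^ i * b ^ (i₁ - i) = b ^ i₁ := by
      rw [← pow_add]
      congr 1
      omega
    have hprod : (∏ k ∈ dn S.val, cc k ^ (i₁ - i)) * (∏ k ∈ dn S.val, cc k ^ (j - i₁))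
        = ∏ k ∈ dn S.val, cc k ^ (j - i) := by
      rw [← Finset.prod_mul_distrib]
      refine Finset.prod_congr rfl fun k _ => ?_
      rw [← pow_add]
      congr 1
      omega
    rw [pow_succ]
    linear_combination (uC f ⟨dn S.val, htc⟩) * hprod
      - ((-1:A)^q * (∏ k ∈ dn S.val, cc k ^ (i₁ - i)) * w₁ ⟨dn S.val, htc⟩) * hb2

end coresec

section mainsteps
variable {A : Type*} [CommRing A] {n : ℕ}

lemma Eop_zero (k : Fin n) (q : ℕ) (s : {s : Finset (Fin n) // s.card = q+1}) :
    Eop k (0 : KoszulDeg A n q) s = 0 := by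
  unfold Eop
  split
  · rw [wext_zero, mul_zero]
  · rfl

lemma koszulD_deg0 (xx : Fin n → A) (w : KoszulDeg A n 1) (t : {t : Finset (Fin n) // t.card = 0}) :
    koszulD xx 0 w t = ∑ k, xx k * w ⟨{k}, Finset.card_singleton k⟩ := by
  have ht : t.val = ∅ := Finset.card_eq_zero.mp t.property
  rw [koszulD_apply, ht, Finset.compl_empty]
  refine Finset.sum_congr rfl fun k _ => ?_
  rw [Finset.filter_empty, Finset.card_empty, pow_zero, one_mul,
    LawfulSingleton.insert_empty_eq, wext_of_card _ (Finset.card_singleton k)]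

lemma mu_deg0 (aa : Fin n → A) (e : ℕ) (h : KoszulDeg A n 0)
    (t : {t : Finset (Fin n) // t.card = 0}) :
    koszulTransition aa e 0 h t = h t := by
  unfold koszulTransition
  rw [Finset.card_eq_zero.mp t.property, Finset.prod_empty, one_mul]

/-- adding one element of the radical to a weakly proregular sequence -/
lemma wpr_snoc (cc : Fin n → A) (b : A) (hb : b ∈ (Ideal.span (Set.range cc)).radical)
    (ha : IsWeaklyProregular cc) : IsWeaklyProregular (Fin.snoc cc b) := by
  intro q i
  obtain ⟨i₁, hii₁, P1⟩ := ha q i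
  cases q with
  | zero =>
      obtain ⟨M, r, hr⟩ := exists_pow_mem hb i₁
      refine ⟨i₁ + M, le_trans hii₁ (Nat.le_add_right _ _), fun f hf => ?_⟩
      have hE1 := extract_E1 cc b 0 (i₁ + M) f hf
      refine wpr_snoc_core cc b 0 i i₁ (i₁+M) hii₁ (Nat.le_add_right _ _) P1 f hE1
        (fun s => ∑ k ∈ s.val, vC f ⟨∅, Finset.card_empty⟩ * r k) (fun t => ?_)
      have hvt : vC f t = vC f ⟨∅, Finset.card_empty⟩ :=
        congrArg (vC f) (Subtype.ext (Finset.card_eq_zero.mp t.property))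
      rw [koszulD_deg0, mu_deg0, hvt, show i₁ + M - i₁ = M from by omega]
      calc ∑ k, cc k ^ i₁ * (∑ l ∈ ({k} : Finset (Fin n)), vC f ⟨∅, Finset.card_empty⟩ * r l)
          = ∑ k, vC f ⟨∅, Finset.card_empty⟩ * (r k * cc k ^ i₁) := by
            refine Finset.sum_congr rfl fun k _ => ?_
            rw [Finset.sum_singleton]
            ring
        _ = vC f ⟨∅, Finset.card_empty⟩ * ∑ k, r k * cc k ^ i₁ := by
            rw [Finset.mul_sum]
        _ = _ := by rw [hr]; ring
  | succ q' =>
      obtain ⟨i₂, hi₁₂, P2⟩ := ha q' i₁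
      refine ⟨i₂, le_trans hii₁ hi₁₂, fun f hf => ?_⟩
      have hE1 := extract_E1 cc b (q'+1) i₂ f hf
      have hE2 := extract_E2 cc b q' i₂ f hf
      obtain ⟨w₁', hw₁'⟩ := P2 (vC f) hE2
      refine wpr_snoc_core cc b (q'+1) i i₁ i₂ hii₁ hi₁₂ P1 f hE1
        (fun t => b^(i₂ - i₁) * w₁' t) (fun t => ?_)
      rw [koszulD_smul, hw₁']

/-- removing one element of the radical from a weakly proregular sequence -/
lemma wpr_snoc_drop (cc : Fin n → A) (b : A) (hb : b ∈ (Ideal.span (Set.range cc)).radical)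
    (hsn : IsWeaklyProregular (Fin.snoc cc b)) : IsWeaklyProregular cc := by
  intro q i
  obtain ⟨M, r, hr⟩ := exists_pow_mem hb i
  obtain ⟨j, hj, P'⟩ := hsn q (i + M)
  refine ⟨j, le_trans (Nat.le_add_right _ _) hj, fun z hz => ?_⟩
  have hf : koszulD (fun k => Fin.snoc cc b k ^ j) q (bld z 0) = 0 := by
    funext S
    rw [Pi.zero_apply]
    by_cases hl : Fin.last n ∈ S.val
    · rcases q with _ | q'
      · exact absurd (Finset.card_eq_zero.mp S.property ▸ hl) (Finset.notMem_empty _)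
      · have htc : (dn S.val).card = q' := by
          have h0 := card_dn_of_mem hl
          rw [S.property] at h0
          exact Nat.succ_injective h0
        have hS : S = ⟨insert (Fin.last n) ((dn S.val).map (csEmb n)), by
            rw [Finset.card_insert_of_notMem (last_not_mem_map _), Finset.card_map, htc]⟩ :=
          Subtype.ext (insert_last_map_dn hl).symm
        rw [hS, koszulD_last _ q' (bld z 0) (dn S.val) htc, vC_bld]
        exact koszulD_zero _ _ _
    · have htc : (dn S.val).card = q := by rw [card_dn_of_not_mem hl, S.property]
      have hS : S = ⟨(dn S.val).map (csEmb n), by rw [Finset.card_map, htc]⟩ :=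
        Subtype.ext (map_dn_of_not_mem hl).symm
      rw [hS, koszulD_cs _ q (bld z 0) (dn S.val) htc, uC_bld, vC_bld]
      simp only [Fin.snoc_castSucc, Fin.snoc_last, Pi.zero_apply, mul_zero, add_zero]
      exact congrFun hz ⟨dn S.val, htc⟩
  obtain ⟨G, hG⟩ := P' (bld z 0) hf
  have hw : koszulD (fun k => cc k ^ (i+M)) q (vC G) = 0 := by
    funext t
    have h := congrFun hG ⟨insert (Fin.last n) (t.val.map (csEmb n)), by
      rw [Finset.card_insert_of_notMem (last_not_mem_map _), Finset.card_map, t.property]⟩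
    have h2 := (koszulD_last (fun k => Fin.snoc cc b k ^ (i+M)) q G t.val
      t.property).symm.trans h
    rw [mu_snoc_last (Fin.snoc cc b) (j - (i+M)) q (bld z 0) t.val t.property, vC_bld] at h2
    simp only [Fin.snoc_castSucc, Fin.snoc_last, koszulTransition, Pi.zero_apply,
      mul_zero] at h2
    rw [Pi.zero_apply]
    exact h2
  have hmain : ∀ t : {t : Finset (Fin n) // t.card = q+1},
      koszulD (fun k => cc k ^ (i+M)) (q+1) (uC G) t
        + (-1:A)^(q+1) * b^(i+M) * vC G t
        = koszulTransition cc (j - (i+M)) (q+1) z t := by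
    intro t
    have h := congrFun hG ⟨t.val.map (csEmb n), by rw [Finset.card_map, t.property]⟩
    have h2 := (koszulD_cs (fun k => Fin.snoc cc b k ^ (i+M)) (q+1) G t.val
      t.property).symm.trans h
    rw [mu_snoc_map (Fin.snoc cc b) (j-(i+M)) (q+1) (bld z 0) t.val t.property, uC_bld] at h2
    simpa only [Fin.snoc_castSucc, Fin.snoc_last] using h2
  have hWz : koszulD (fun k => cc k ^ i) q (koszulTransition cc M (q+1) (vC G)) = 0 := by
    funext t'
    rw [Pi.zero_apply, koszulD_mu,
      show (fun k => cc k ^ (M + i)) = (fun k => cc k ^ (i + M)) from by rw [Nat.add_comm],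
      hw]
    simp [koszulTransition]
  refine ⟨(fun t => koszulTransition cc M (q+2) (uC G) t
      + (-1:A)^(q+1) * b^i * ∑ k, r k * Eop k (koszulTransition cc M (q+1) (vC G)) t), ?_⟩
  funext t
  rw [koszulD_add, koszulD_smul, koszulD_finsum]
  have hsum2 : ∑ k, koszulD (fun k' => cc k' ^ i) (q+1)
        (fun u => r k * Eop k (koszulTransition cc M (q+1) (vC G)) u) t
      = b^M * koszulTransition cc M (q+1) (vC G) t := by
    calc ∑ k, koszulD (fun k' => cc k' ^ i) (q+1)
          (fun u => r k * Eop k (koszulTransition cc M (q+1) (vC G)) u) t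
        = ∑ k, r k * (cc k ^ i * koszulTransition cc M (q+1) (vC G) t) := by
          refine Finset.sum_congr rfl fun k _ => ?_
          rw [koszulD_smul]
          congr 1
          have h := koszulD_Eop (fun k' => cc k' ^ i) q k
            (koszulTransition cc M (q+1) (vC G)) t
          rw [hWz] at h
          rw [Eop_zero, add_zero] at h
          exact h
      _ = (∑ k, r k * cc k ^ i) * koszulTransition cc M (q+1) (vC G) t := by
          rw [Finset.sum_mul]
          exact Finset.sum_congr rfl fun k _ => by ring
      _ = _ := by rw [hr]
  have hufun : koszulD (fun k => cc k ^ (i+M)) (q+1) (uC G)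
      = fun t => koszulTransition cc (j - (i+M)) (q+1) z t
        - (-1:A)^(q+1) * b^(i+M) * vC G t :=
    funext fun t => eq_sub_of_add_eq (hmain t)
  rw [hsum2, koszulD_mu,
    show (fun k => cc k ^ (M + i)) = (fun k => cc k ^ (i + M)) from by rw [Nat.add_comm],
    hufun]
  simp only [koszulTransition]
  have hb2 : b ^ i * b ^ M = b ^ (i + M) := by rw [← pow_add]
  have hprod : (∏ k ∈ t.val, cc k ^ M) * (∏ k ∈ t.val, cc k ^ (j - (i+M)))
      = ∏ k ∈ t.val, cc k ^ (j - i) := by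
    rw [← Finset.prod_mul_distrib]
    refine Finset.prod_congr rfl fun k _ => ?_
    rw [← pow_add]
    congr 1
    omega
  linear_combination (z t) * hprod
    + ((-1:A)^(q+1) * (∏ k ∈ t.val, cc k ^ M) * vC G t) * hb2

end mainsteps

section assembly
variable {A : Type*} [CommRing A]

lemma wpr_cast {m n : ℕ} (h : m = n) (u : Fin n → A) :
    IsWeaklyProregular (u ∘ Fin.cast h) → IsWeaklyProregular u := by
  subst h
  exact fun x => x

lemma wpr_cast' {m n : ℕ} (h : m = n) (u : Fin n → A) :
    IsWeaklyProregular u → IsWeaklyProregular (u ∘ Fin.cast h) := by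
  subst h
  exact fun x => x

lemma wpr_append_right {n : ℕ} (aa : Fin n → A) :
    ∀ {m : ℕ} (bb : Fin m → A),
      (∀ l, bb l ∈ (Ideal.span (Set.range aa)).radical) →
      IsWeaklyProregular aa → IsWeaklyProregular (Fin.append aa bb) := by
  intro m
  induction m with
  | zero =>
      intro bb _ ha
      rw [Fin.append_right_nil aa bb rfl]
      exact wpr_cast' _ aa ha
  | succ m ih =>
      intro bb hbb ha
      rw [show bb = Fin.snoc (Fin.init bb) (bb (Fin.last m)) from (Fin.snoc_init_self bb).symm,
        Fin.append_snoc]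
      refine wpr_snoc _ _ ?_ (ih (Fin.init bb) (fun l => hbb (Fin.castSucc l)) ha)
      have hsub : Set.range aa ⊆ Set.range (Fin.append aa (Fin.init bb)) := by
        rintro x ⟨k, rfl⟩
        exact ⟨Fin.castAdd m k, Fin.append_left _ _ k⟩
      exact Ideal.radical_mono (Ideal.span_mono hsub) (hbb (Fin.last m))

lemma wpr_drop {m' : ℕ} (v : Fin m' → A) :
    ∀ {k : ℕ} (u : Fin k → A),
      (∀ t, u t ∈ (Ideal.span (Set.range v)).radical) →
      IsWeaklyProregular (Fin.append v u) → IsWeaklyProregular v := by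
  intro k
  induction k with
  | zero =>
      intro u _ h
      rw [Fin.append_right_nil v u rfl] at h
      exact wpr_cast _ v h
  | succ k ih =>
      intro u hu h
      rw [show u = Fin.snoc (Fin.init u) (u (Fin.last k)) from (Fin.snoc_init_self u).symm,
        Fin.append_snoc] at h
      have hsub : Set.range v ⊆ Set.range (Fin.append v (Fin.init u)) := by
        rintro x ⟨l, rfl⟩
        exact ⟨Fin.castAdd k l, Fin.append_left _ _ l⟩
      have h2 := wpr_snoc_drop (Fin.append v (Fin.init u)) (u (Fin.last k))
        (Ideal.radical_mono (Ideal.span_mono hsub) (hu (Fin.last k))) h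
      exact ih (Fin.init u) (fun t => hu (Fin.castSucc t)) h2

lemma wpr_of_radical_eq {n m : ℕ} (aa : Fin n → A) (bb : Fin m → A)
    (h : (Ideal.span (Set.range aa)).radical = (Ideal.span (Set.range bb)).radical)
    (ha : IsWeaklyProregular aa) : IsWeaklyProregular bb := by
  have h1 : IsWeaklyProregular (Fin.append aa bb) := by
    refine wpr_append_right aa bb (fun l => ?_) ha
    rw [h]
    exact Ideal.le_radical (Ideal.subset_span ⟨l, rfl⟩)
  have h2 := wpr_rev h1
  have hre : (fun k => Fin.append aa bb (Fin.rev k))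
      = (Fin.append (bb ∘ Fin.rev) (aa ∘ Fin.rev)) ∘ Fin.cast (Nat.add_comm n m) := by
    funext k
    exact Fin.append_rev aa bb k
  rw [hre] at h2
  have h3 := wpr_cast (Nat.add_comm n m) _ h2
  have hrange : Set.range (bb ∘ Fin.rev) = Set.range bb := by
    ext x
    constructor
    · rintro ⟨l, rfl⟩
      exact ⟨Fin.rev l, rfl⟩
    · rintro ⟨l, rfl⟩
      refine ⟨Fin.rev l, ?_⟩
      show bb (Fin.rev (Fin.rev l)) = bb l
      rw [Fin.rev_rev]
  have hrad : ∀ t, (aa ∘ Fin.rev) t ∈ (Ideal.span (Set.range (bb ∘ Fin.rev))).radical := by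
    intro t
    rw [hrange, ← h]
    exact Ideal.le_radical (Ideal.subset_span ⟨Fin.rev t, rfl⟩)
  have h4 := wpr_drop (bb ∘ Fin.rev) (aa ∘ Fin.rev) hrad h3
  have h5 : IsWeaklyProregular (fun k => bb (Fin.rev (Fin.rev k))) := wpr_rev h4
  have h6 : (fun k => bb (Fin.rev (Fin.rev k))) = bb := by
    funext k
    rw [Fin.rev_rev]
  exact h6 ▸ h5

end assembly


/-- If `aa` and `bb` are finite sequences in `A` generating ideals with the same
radical, then `aa` is weakly proregular iff `bb` is weakly proregular. -/
theorem isWeaklyProregular_iff_of_radical_eq {A : Type*} [CommRing A]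
    {n m : ℕ} (aa : Fin n → A) (bb : Fin m → A)
    (h : (Ideal.span (Set.range aa)).radical = (Ideal.span (Set.range bb)).radical) :
    IsWeaklyProregular aa ↔ IsWeaklyProregular bb :=
  ⟨fun ha => wpr_of_radical_eq aa bb h ha, fun hbb => wpr_of_radical_eq bb aa h.symm hbb⟩
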